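/- arXiv:2501.05373 — 2 statements merged into one kernel-verified Lean document; each statement's English description precedes it below -/
import Mathlib

section
/- The function arc₁ (length of a circular arc over a unit chord enclosing area x) is strictly convex on [0, π/8) and strictly concave on (π/8, ∞). -/
open Real Set

/-- `f` is the function `arc₁`: `f x` is the length of the circular arc subtending a
chord of length `1` and enclosing, together with the chord, a region of area `x`. -/
def IsArcOne (f : ℝ → ℝ) : Prop :=
  ContinuousOn f (Set.Ici 0) ∧
  ∀ θ ∈ Set.Ioo 0 Real.pi,
    f ((θ - Real.sin θ * Real.cos θ) / (4 * Real.sin θ ^ 2)) = θ / Real.sin θ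

/-- The area enclosed between a chord of length 1 and the circular arc with half central
angle `θ`. -/
noncomputable def Xf (θ : ℝ) : ℝ := (θ - Real.sin θ * Real.cos θ) / (4 * Real.sin θ ^ 2)

lemma num_pos {θ : ℝ} (hθ : θ ∈ Ioo 0 Real.pi) : 0 < Real.sin θ - θ * Real.cos θ := by
  have key : StrictMonoOn (fun t => Real.sin t - t * Real.cos t) (Icc 0 Real.pi) := by
    apply strictMonoOn_of_deriv_pos (convex_Icc _ _)
    · fun_prop
    · intro t ht
      rw [interior_Icc] at ht
      have hd : HasDerivAt (fun t => Real.sin t - t * Real.cos t)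
          (Real.cos t - (1 * Real.cos t + t * -Real.sin t)) t :=
        (Real.hasDerivAt_sin t).sub ((hasDerivAt_id t).mul (Real.hasDerivAt_cos t))
      rw [hd.deriv]
      nlinarith [mul_pos ht.1 (Real.sin_pos_of_pos_of_lt_pi ht.1 ht.2)]
  have := key (by constructor <;> [rfl; positivity] : (0:ℝ) ∈ Icc 0 Real.pi)
    ⟨hθ.1.le, hθ.2.le⟩ hθ.1
  simpa using this

lemma Xf_hasDerivAt {θ : ℝ} (hθ : θ ∈ Ioo 0 Real.pi) :
    HasDerivAt Xf ((Real.sin θ - θ * Real.cos θ) / (2 * Real.sin θ ^ 3)) θ := by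
  have hs : 0 < Real.sin θ := Real.sin_pos_of_pos_of_lt_pi hθ.1 hθ.2
  have h1 : HasDerivAt (fun t => t - Real.sin t * Real.cos t)
      (1 - (Real.cos θ * Real.cos θ + Real.sin θ * (-Real.sin θ))) θ :=
    (hasDerivAt_id θ).sub ((Real.hasDerivAt_sin θ).mul (Real.hasDerivAt_cos θ))
  have h2 : HasDerivAt (fun t => 4 * Real.sin t ^ 2)
      (4 * (2 * Real.sin θ ^ 1 * Real.cos θ)) θ :=
    ((Real.hasDerivAt_sin θ).pow 2).const_mul 4
  have h3 := h1.div h2 (by positivity)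
  refine h3.congr_deriv ?_
  have hpy := Real.sin_sq_add_cos_sq θ
  field_simp
  linear_combination (2 * Real.sin θ) * hpy

lemma Xf_pos {θ : ℝ} (hθ : θ ∈ Ioo 0 Real.pi) : 0 < Xf θ := by
  have hs : 0 < Real.sin θ := Real.sin_pos_of_pos_of_lt_pi hθ.1 hθ.2
  have hlt : Real.sin θ < θ := Real.sin_lt hθ.1
  have hc1 : Real.cos θ ≤ 1 := Real.cos_le_one θ
  apply div_pos _ (by positivity)
  nlinarith [mul_nonneg hs.le (sub_nonneg.2 hc1)]

lemma Xf_strictMono : StrictMonoOn Xf (Ioo 0 Real.pi) := by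
  apply strictMonoOn_of_deriv_pos (convex_Ioo _ _)
  · exact fun θ hθ => (Xf_hasDerivAt hθ).differentiableAt.continuousAt.continuousWithinAt
  · intro θ hθ
    rw [interior_Ioo] at hθ
    rw [(Xf_hasDerivAt hθ).deriv]
    have hs : 0 < Real.sin θ := Real.sin_pos_of_pos_of_lt_pi hθ.1 hθ.2
    exact div_pos (num_pos hθ) (by positivity)

lemma Xf_lt_self {θ : ℝ} (h0 : 0 < θ) (h1 : θ ≤ 1/2) : Xf θ < θ := by
  have hspos : 0 < Real.sin θ :=
    Real.sin_pos_of_pos_of_lt_pi h0 (lt_of_le_of_lt h1 (by linarith [Real.pi_gt_three]))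
  have hs' : 15/16 * θ ≤ Real.sin θ := by
    nlinarith [Real.sin_gt_sub_cube h0, mul_pos h0 (mul_pos h0 h0)]
  have hcube : θ - Real.sin θ * Real.cos θ ≤ θ^3 := by
    have h2 := Real.sin_gt_sub_cube (by positivity : 0 < 2*θ)
    have h3 := Real.sin_two_mul θ
    nlinarith [pow_pos h0 3]
  rw [Xf, div_lt_iff₀ (by positivity)]
  nlinarith [mul_le_mul hs' hs' (by positivity) hspos.le, mul_pos h0 (mul_pos h0 h0)]

lemma Xf_large {θ : ℝ} (h2 : 2 < θ) (hπ : θ < Real.pi) :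
    1 / (4 * (Real.pi - θ)^2) ≤ Xf θ := by
  have hs0 : 0 < Real.sin θ := Real.sin_pos_of_pos_of_lt_pi (by linarith) hπ
  have hsle : Real.sin θ ≤ Real.pi - θ := by
    rw [← Real.sin_pi_sub]
    exact Real.sin_le (by linarith)
  have hsc : Real.sin θ * Real.cos θ ≤ 1/2 := by
    nlinarith [sq_nonneg (Real.sin θ - Real.cos θ), Real.sin_sq_add_cos_sq θ]
  have hnum : 1 ≤ θ - Real.sin θ * Real.cos θ := by linarith
  exact div_le_div₀ (by linarith) hnum (by positivity) (by nlinarith)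

lemma Xf_surj : SurjOn Xf (Ioo 0 Real.pi) (Ioi 0) := by
  intro y hy
  simp only [mem_Ioi] at hy
  set θ₁ := min (1/2 : ℝ) y with hθ₁def
  have hθ₁pos : 0 < θ₁ := lt_min (by norm_num) hy
  have hX1 : Xf θ₁ < y := (Xf_lt_self hθ₁pos (min_le_left _ _)).trans_le (min_le_right _ _)
  have hty : Real.sqrt y ^ 2 = y := Real.sq_sqrt hy.le
  have htpos : 0 ≤ Real.sqrt y := Real.sqrt_nonneg y
  set δ := min (1/2 : ℝ) (1/(2*Real.sqrt y + 1)) with hδdef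
  have hδpos : 0 < δ := lt_min (by norm_num) (by positivity)
  have hδle : δ * (2*Real.sqrt y + 1) ≤ 1 := by
    have := min_le_right (1/2 : ℝ) (1/(2*Real.sqrt y + 1))
    rw [le_div_iff₀ (by positivity)] at this
    linarith [this]
  set θ₂ := Real.pi - δ with hθ₂def
  have h2 : 2 < θ₂ := by
    have := min_le_left (1/2 : ℝ) (1/(2*Real.sqrt y + 1))
    have hπ := Real.pi_gt_three
    simp only [hθ₂def]; linarith
  have hθ₂π : θ₂ < Real.pi := by simp only [hθ₂def]; linarith
  have hX2 : y < Xf θ₂ := by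
    have hlarge := Xf_large h2 hθ₂π
    have hπθ : Real.pi - θ₂ = δ := by simp [hθ₂def]
    rw [hπθ] at hlarge
    have hy2 : y < 1 / (4 * δ^2) := by
      rw [lt_div_iff₀ (by positivity)]
      nlinarith [hδle, hδpos, mul_nonneg htpos hδpos.le]
    linarith
  have hθ₁₂ : θ₁ ≤ θ₂ := by
    have := min_le_left (1/2 : ℝ) y; linarith
  have hsub : Icc θ₁ θ₂ ⊆ Ioo 0 Real.pi := fun t ht =>
    ⟨lt_of_lt_of_le hθ₁pos ht.1, lt_of_le_of_lt ht.2 hθ₂π⟩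
  have hcont : ContinuousOn Xf (Icc θ₁ θ₂) := by
    apply ContinuousOn.div (by fun_prop) (by fun_prop)
    intro t ht
    have := Real.sin_pos_of_pos_of_lt_pi (hsub ht).1 (hsub ht).2
    positivity
  obtain ⟨t, htmem, hteq⟩ := intermediate_value_Icc hθ₁₂ hcont ⟨hX1.le, hX2.le⟩
  exact ⟨t, hsub htmem, hteq⟩

/-- The inverse of `Xf`: the half central angle as a function of the enclosed area. -/
noncomputable def Pf : ℝ → ℝ := Function.invFunOn Xf (Ioo 0 Real.pi)

lemma Pf_mem {y : ℝ} (hy : y ∈ Ioi 0) : Pf y ∈ Ioo 0 Real.pi := by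
  obtain ⟨a, ha, hae⟩ := Xf_surj hy
  exact Function.invFunOn_mem ⟨a, ha, hae⟩

lemma Xf_Pf {y : ℝ} (hy : y ∈ Ioi 0) : Xf (Pf y) = y := by
  obtain ⟨a, ha, hae⟩ := Xf_surj hy
  exact Function.invFunOn_eq ⟨a, ha, hae⟩

lemma Pf_Xf {θ : ℝ} (hθ : θ ∈ Ioo 0 Real.pi) : Pf (Xf θ) = θ :=
  Xf_strictMono.injOn.leftInvOn_invFunOn hθ

lemma Pf_mono : StrictMonoOn Pf (Ioi 0) := fun y1 h1 y2 h2 h12 =>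
  (Xf_strictMono.lt_iff_lt (Pf_mem h1) (Pf_mem h2)).1
    (by rw [Xf_Pf h1, Xf_Pf h2]; exact h12)

lemma Pf_image : Pf '' (Ioi 0) = Ioo 0 Real.pi := by
  apply Subset.antisymm
  · rintro θ ⟨y, hy, rfl⟩; exact Pf_mem hy
  · intro θ hθ
    exact ⟨Xf θ, Xf_pos hθ, Pf_Xf hθ⟩

lemma Pf_contAt {y : ℝ} (hy : y ∈ Ioi 0) : ContinuousAt Pf y :=
  Pf_mono.continuousAt_of_image_mem_nhds (isOpen_Ioi.mem_nhds hy)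
    (by rw [Pf_image]; exact isOpen_Ioo.mem_nhds (Pf_mem hy))

lemma Xf_half : Xf (Real.pi / 2) = Real.pi / 8 := by
  simp [Xf, Real.sin_pi_div_two, Real.cos_pi_div_two]
  ring

lemma Pf_eighth : Pf (Real.pi / 8) = Real.pi / 2 := by
  rw [← Xf_half, Pf_Xf]
  constructor <;> linarith [Real.pi_pos]

lemma f_hasDerivAt {f : ℝ → ℝ}
    (hf2 : ∀ θ ∈ Set.Ioo 0 Real.pi,
      f ((θ - Real.sin θ * Real.cos θ) / (4 * Real.sin θ ^ 2)) = θ / Real.sin θ)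
    {y : ℝ} (hy : y ∈ Ioi 0) : HasDerivAt f (2 * Real.sin (Pf y)) y := by
  set θ := Pf y with hθdef
  have hθmem : θ ∈ Ioo 0 Real.pi := Pf_mem hy
  have hs : 0 < Real.sin θ := Real.sin_pos_of_pos_of_lt_pi hθmem.1 hθmem.2
  have hn : 0 < Real.sin θ - θ * Real.cos θ := num_pos hθmem
  have hψ' : HasDerivAt Pf (((Real.sin θ - θ * Real.cos θ) / (2 * Real.sin θ ^ 3))⁻¹) y :=
    HasDerivAt.of_local_left_inverse (Pf_contAt hy) (Xf_hasDerivAt hθmem)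
      (by positivity)
      (Filter.eventually_of_mem (isOpen_Ioi.mem_nhds hy) (fun z hz => Xf_Pf hz))
  have hG : HasDerivAt (fun t => t / Real.sin t)
      ((1 * Real.sin θ - θ * Real.cos θ) / Real.sin θ ^ 2) θ :=
    (hasDerivAt_id θ).div (Real.hasDerivAt_sin θ) hs.ne'
  have hcomp := hG.comp y hψ'
  have hfeq : f =ᶠ[nhds y] (fun t => t / Real.sin t) ∘ Pf := by
    apply Filter.eventually_of_mem (isOpen_Ioi.mem_nhds hy)
    intro z hz
    have := hf2 (Pf z) (Pf_mem hz)
    simp only [Function.comp_apply]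
    rw [← this]
    congr 1
    exact (Xf_Pf hz).symm
  have := hcomp.congr_of_eventuallyEq hfeq
  refine this.congr_deriv ?_
  rw [one_mul]
  field_simp

/-- `arc₁` is strictly convex on `[0, π/8)` and strictly concave on `(π/8, ∞)`. -/
theorem stmt6 (f : ℝ → ℝ) (hf : IsArcOne f) :
    StrictConvexOn ℝ (Set.Ico 0 (Real.pi / 8)) f ∧
    StrictConcaveOn ℝ (Set.Ioi (Real.pi / 8)) f := by
  obtain ⟨hfc, hf2⟩ := hf
  have hπ := Real.pi_pos
  constructor
  · apply StrictMonoOn.strictConvexOn_of_deriv (convex_Ico _ _)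
      (hfc.mono (fun x hx => hx.1))
    rw [interior_Ico]
    intro y1 h1 y2 h2 h12
    have hy1 : y1 ∈ Ioi (0:ℝ) := h1.1
    have hy2 : y2 ∈ Ioi (0:ℝ) := h2.1
    rw [(f_hasDerivAt hf2 hy1).deriv, (f_hasDerivAt hf2 hy2).deriv]
    have hm1 : Pf y1 ∈ Ioo 0 Real.pi := Pf_mem hy1
    have hm2 : Pf y2 ∈ Ioo 0 Real.pi := Pf_mem hy2
    have hlt1 : Pf y1 < Real.pi / 2 := by
      rw [← Pf_eighth]
      exact Pf_mono hy1 (by positivity : (0:ℝ) < Real.pi / 8) h1.2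
    have hlt2 : Pf y2 < Real.pi / 2 := by
      rw [← Pf_eighth]
      exact Pf_mono hy2 (by positivity : (0:ℝ) < Real.pi / 8) h2.2
    have hP12 : Pf y1 < Pf y2 := Pf_mono hy1 hy2 h12
    have := Real.strictMonoOn_sin (a := Pf y1) (b := Pf y2)
      ⟨by linarith [hm1.1], hlt1.le⟩ ⟨by linarith [hm2.1], hlt2.le⟩ hP12
    linarith
  · apply StrictAntiOn.strictConcaveOn_of_deriv (convex_Ioi _)
      (hfc.mono (fun x hx => le_of_lt (lt_trans (by positivity : (0:ℝ) < Real.pi / 8) hx)))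
    rw [interior_Ioi]
    intro y1 h1 y2 h2 h12
    have hy1 : y1 ∈ Ioi (0:ℝ) := lt_trans (by positivity : (0:ℝ) < Real.pi / 8) h1
    have hy2 : y2 ∈ Ioi (0:ℝ) := lt_trans (by positivity : (0:ℝ) < Real.pi / 8) h2
    rw [(f_hasDerivAt hf2 hy1).deriv, (f_hasDerivAt hf2 hy2).deriv]
    have hm1 : Pf y1 ∈ Ioo 0 Real.pi := Pf_mem hy1
    have hm2 : Pf y2 ∈ Ioo 0 Real.pi := Pf_mem hy2
    have hgt1 : Real.pi / 2 < Pf y1 := by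
      rw [← Pf_eighth]
      exact Pf_mono (by positivity : (0:ℝ) < Real.pi / 8) hy1 h1
    have hgt2 : Real.pi / 2 < Pf y2 := by
      rw [← Pf_eighth]
      exact Pf_mono (by positivity : (0:ℝ) < Real.pi / 8) hy2 h2
    have hP12 : Pf y1 < Pf y2 := Pf_mono hy1 hy2 h12
    have key : Real.sin (Pf y2) < Real.sin (Pf y1) := by
      rw [← Real.sin_pi_sub (Pf y1), ← Real.sin_pi_sub (Pf y2)]
      exact Real.strictMonoOn_sin
        ⟨by linarith [hm2.2], by linarith⟩ ⟨by linarith [hm1.2], by linarith⟩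
        (by linarith)
    linarith
end

section
/- Chordal isoperimetric estimate: let Π be a convex hexagon with sides of lengths ℓ₁,...,ℓ₆, each ℓᵢ < 1, and let γ be a closed curve obtained by replacing each side of Π by a circular arc with the same endpoints, where the i-th arc encloses area xᵢ ≥ 0 with the i-th side and xᵢ/ℓᵢ ≤ π/8 for all i. Then L(γ) ≥ P(Π)·arc₁((∑xᵢ)/P(Π)). -/
open scoped BigOperators

open Real Set Filter

noncomputable def gA (θ : ℝ) : ℝ := (θ - Real.sin θ * Real.cos θ) / (4 * Real.sin θ ^ 2)
noncomputable def hA (θ : ℝ) : ℝ := if θ = 0 then 1 else θ / Real.sin θ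

lemma gA_zero : gA 0 = 0 := by simp [gA]

lemma hA_zero : hA 0 = 1 := by simp [hA]

lemma hA_of_ne {θ : ℝ} (h : θ ≠ 0) : hA θ = θ / Real.sin θ := by simp [hA, h]

lemma key1 {θ : ℝ} (h : θ ∈ Ioo 0 π) : 0 < θ - Real.sin θ * Real.cos θ := by
  have hmono : StrictMonoOn (fun t => t - Real.sin t * Real.cos t) (Icc 0 π) := by
    apply strictMonoOn_of_deriv_pos (convex_Icc 0 π)
    · fun_prop
    · intro t ht
      rw [interior_Icc] at ht
      have hd : HasDerivAt (fun t => t - Real.sin t * Real.cos t)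
          (1 - (Real.cos t * Real.cos t + Real.sin t * (-Real.sin t))) t := by
        exact (hasDerivAt_id t).sub ((Real.hasDerivAt_sin t).mul (Real.hasDerivAt_cos t))
      rw [hd.deriv]
      have hs := Real.sin_pos_of_pos_of_lt_pi ht.1 ht.2
      nlinarith [Real.sin_sq_add_cos_sq t]
  have := hmono (by constructor <;> simp [le_of_lt h.1, le_of_lt h.2, Real.pi_pos.le])
    ⟨h.1.le, h.2.le⟩ h.1
  simpa using this

lemma key2 {θ : ℝ} (h : θ ∈ Ioo 0 π) : 0 < Real.sin θ - θ * Real.cos θ := by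
  have hmono : StrictMonoOn (fun t => Real.sin t - t * Real.cos t) (Icc 0 π) := by
    apply strictMonoOn_of_deriv_pos (convex_Icc 0 π)
    · fun_prop
    · intro t ht
      rw [interior_Icc] at ht
      have hd : HasDerivAt (fun t => Real.sin t - t * Real.cos t)
          (Real.cos t - (1 * Real.cos t + t * (-Real.sin t))) t := by
        exact (Real.hasDerivAt_sin t).sub ((hasDerivAt_id t).mul (Real.hasDerivAt_cos t))
      rw [hd.deriv]
      have hs := Real.sin_pos_of_pos_of_lt_pi ht.1 ht.2
      nlinarith [mul_pos ht.1 hs]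
  have := hmono (by constructor <;> simp [Real.pi_pos.le]) ⟨h.1.le, h.2.le⟩ h.1
  simpa using this

lemma gA_hasDeriv {θ : ℝ} (h : θ ∈ Ioo 0 π) :
    HasDerivAt gA ((Real.sin θ - θ * Real.cos θ) / (2 * Real.sin θ ^ 3)) θ := by
  have hs := Real.sin_pos_of_pos_of_lt_pi h.1 h.2
  have hnum : HasDerivAt (fun t => t - Real.sin t * Real.cos t)
      (1 - (Real.cos θ * Real.cos θ + Real.sin θ * (-Real.sin θ))) θ :=
    (hasDerivAt_id θ).sub ((Real.hasDerivAt_sin θ).mul (Real.hasDerivAt_cos θ))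
  have hden : HasDerivAt (fun t => 4 * Real.sin t ^ 2)
      (4 * (2 * Real.sin θ ^ 1 * Real.cos θ)) θ := by
    exact (((Real.hasDerivAt_sin θ).pow 2)).const_mul 4
  have := hnum.div hden (by positivity)
  refine HasDerivAt.congr_deriv (f := gA) this ?_
  have h1 := Real.sin_sq_add_cos_sq θ
  field_simp
  linear_combination (2 * Real.sin θ) * h1

lemma hA_hasDeriv {θ : ℝ} (h : θ ∈ Ioo 0 π) :
    HasDerivAt hA ((Real.sin θ - θ * Real.cos θ) / Real.sin θ ^ 2) θ := by
  have hs := Real.sin_pos_of_pos_of_lt_pi h.1 h.2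
  have hd : HasDerivAt (fun t => t / Real.sin t)
      ((1 * Real.sin θ - θ * Real.cos θ) / Real.sin θ ^ 2) θ :=
    (hasDerivAt_id θ).div (Real.hasDerivAt_sin θ) hs.ne'
  have heq : hA =ᶠ[nhds θ] (fun t => t / Real.sin t) := by
    filter_upwards [isOpen_compl_singleton.mem_nhds (by simpa using h.1.ne' : θ ∈ ({0}ᶜ : Set ℝ))]
      with t ht
    exact hA_of_ne ht
  have := hd.congr_of_eventuallyEq heq
  simpa using this
lemma gA_nonneg {θ : ℝ} (h : θ ∈ Icc 0 π) : 0 ≤ gA θ := by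
  rcases eq_or_lt_of_le h.1 with h0 | h0
  · simp [← h0, gA_zero]
  have hs : 0 ≤ Real.sin θ := Real.sin_nonneg_of_nonneg_of_le_pi h.1 h.2
  have hnum : 0 ≤ θ - Real.sin θ * Real.cos θ := by
    have h1 : Real.sin θ * Real.cos θ ≤ Real.sin θ * 1 :=
      mul_le_mul_of_nonneg_left (Real.cos_le_one θ) hs
    have h2 : Real.sin θ ≤ θ := Real.sin_le h.1
    linarith
  exact div_nonneg hnum (by positivity)

lemma gA_pos {θ : ℝ} (h : θ ∈ Ioo 0 π) : 0 < gA θ := by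
  have hs := Real.sin_pos_of_pos_of_lt_pi h.1 h.2
  exact div_pos (key1 h) (by positivity)

lemma gA_tendsto_zero : Tendsto gA (nhdsWithin 0 (Ioi 0)) (nhds 0) := by
  apply squeeze_zero' (g := fun θ => (4/9) * θ)
  · filter_upwards [Ioo_mem_nhdsGT_of_mem (Set.left_mem_Ico.2 (by norm_num : (0:ℝ) < 1/2))]
      with θ hθ
    exact gA_nonneg ⟨hθ.1.le, by nlinarith [Real.pi_gt_three, hθ.2]⟩
  · filter_upwards [Ioo_mem_nhdsGT_of_mem (Set.left_mem_Ico.2 (by norm_num : (0:ℝ) < 1/2))]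
      with θ hθ
    obtain ⟨hθ0, hθh⟩ := hθ
    have hsin : (3/4) * θ ≤ Real.sin θ := by
      have := Real.sin_gt_sub_cube hθ0
      nlinarith [mul_pos (mul_pos hθ0 hθ0) hθ0, mul_pos hθ0 hθ0]
    have hnum : θ - Real.sin θ * Real.cos θ ≤ θ ^ 3 := by
      have h2 : 2*θ - (2*θ) ^ 3 / 4 < Real.sin (2*θ) :=
        by have := Real.sin_gt_sub_cube (by linarith : (0:ℝ) < 2*θ); nlinarith [pow_pos hθ0 3]
      have h3 : Real.sin (2*θ) = 2 * Real.sin θ * Real.cos θ := Real.sin_two_mul θ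
      nlinarith
    have hden : (9/4) * θ^2 ≤ 4 * Real.sin θ ^ 2 := by nlinarith
    calc gA θ ≤ θ^3 / ((9/4) * θ^2) :=
          div_le_div₀ (by positivity) hnum (by positivity) hden
      _ = (4/9) * θ := by field_simp
  · have : Tendsto (fun θ : ℝ => (4/9) * θ) (nhds 0) (nhds ((4/9) * 0)) :=
      tendsto_id.const_mul _
    simpa using this.mono_left nhdsWithin_le_nhds

lemma gA_contOn : ContinuousOn gA (Ico 0 π) := by
  intro θ hθ
  rcases eq_or_lt_of_le hθ.1 with h0 | h0
  · rw [← continuousWithinAt_diff_self]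
    have : Ico (0:ℝ) π \ {0} ⊆ Ioi 0 := fun t ht =>
      lt_of_le_of_ne ht.1.1 (Ne.symm ht.2)
    rw [ContinuousWithinAt, ← h0, gA_zero]
    exact gA_tendsto_zero.mono_left (nhdsWithin_mono _ this)
  · have hs := Real.sin_pos_of_pos_of_lt_pi h0 hθ.2
    have : ContinuousAt gA θ := by
      apply ContinuousAt.div (by fun_prop) (by fun_prop)
      positivity
    exact this.continuousWithinAt

lemma hA_tendsto_one : Tendsto hA (nhdsWithin 0 ({0}ᶜ)) (nhds 1) := by
  have h1 : Tendsto (slope Real.sin 0) (nhdsWithin 0 ({0}ᶜ)) (nhds 1) := by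
    have := Real.hasDerivAt_sin 0
    rw [hasDerivAt_iff_tendsto_slope] at this
    simpa using this
  have h2 : Tendsto (fun θ => (slope Real.sin 0 θ)⁻¹) (nhdsWithin 0 ({0}ᶜ)) (nhds 1) := by
    simpa using h1.inv₀ (by norm_num)
  apply h2.congr'
  filter_upwards [self_mem_nhdsWithin] with θ hθ
  have hne : θ ≠ 0 := hθ
  have : slope Real.sin 0 θ = Real.sin θ / θ := by simp [slope_def_field]
  rw [this, inv_div, hA_of_ne hne]

lemma hA_contOn : ContinuousOn hA (Ico 0 π) := by
  intro θ hθ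
  rcases eq_or_lt_of_le hθ.1 with h0 | h0
  · rw [← continuousWithinAt_diff_self]
    have hsub : Ico (0:ℝ) π \ {0} ⊆ ({0}ᶜ : Set ℝ) := fun t ht => ht.2
    rw [ContinuousWithinAt, ← h0, hA_zero]
    exact hA_tendsto_one.mono_left (nhdsWithin_mono _ hsub)
  · have hs := Real.sin_pos_of_pos_of_lt_pi h0 hθ.2
    have hc : ContinuousAt (fun t => t / Real.sin t) θ :=
      ContinuousAt.div (by fun_prop) (by fun_prop) hs.ne'
    have : ContinuousAt hA θ := by
      apply hc.congr
      filter_upwards [isOpen_compl_singleton.mem_nhds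
        (by simpa using h0.ne' : θ ∈ ({0}ᶜ : Set ℝ))] with t ht
      exact (hA_of_ne ht).symm
    exact this.continuousWithinAt
lemma gA_mono : StrictMonoOn gA (Ico 0 π) := by
  apply strictMonoOn_of_deriv_pos (convex_Ico 0 π) gA_contOn
  intro t ht
  rw [interior_Ico] at ht
  rw [(gA_hasDeriv ht).deriv]
  have hs := Real.sin_pos_of_pos_of_lt_pi ht.1 ht.2
  exact div_pos (key2 ht) (by positivity)

lemma hA_mono : StrictMonoOn hA (Ico 0 π) := by
  apply strictMonoOn_of_deriv_pos (convex_Ico 0 π) hA_contOn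
  intro t ht
  rw [interior_Ico] at ht
  rw [(hA_hasDeriv ht).deriv]
  have hs := Real.sin_pos_of_pos_of_lt_pi ht.1 ht.2
  exact div_pos (key2 ht) (by positivity)

lemma gA_half : gA (π/2) = π/8 := by
  simp [gA, Real.sin_pi_div_two, Real.cos_pi_div_two]
  ring

lemma gA_surj {y : ℝ} (hy : 0 ≤ y) : ∃ θ ∈ Ico 0 π, gA θ = y := by
  rcases eq_or_lt_of_le hy with h0 | h0
  · exact ⟨0, ⟨le_refl _, Real.pi_pos⟩, by rw [gA_zero, h0]⟩
  -- gA tends to atTop at π from the left within Ioo 0 π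
  have hne : (nhdsWithin π (Ioo 0 π)).NeBot := right_nhdsWithin_Ioo_neBot Real.pi_pos
  have htop : Tendsto gA (nhdsWithin π (Ioo 0 π)) atTop := by
    have hnum : Tendsto (fun θ => θ - Real.sin θ * Real.cos θ) (nhdsWithin π (Ioo 0 π))
        (nhds π) := by
      have : Tendsto (fun θ => θ - Real.sin θ * Real.cos θ) (nhds π)
          (nhds (π - Real.sin π * Real.cos π)) :=
        (Continuous.tendsto (by continuity) π)
      simpa using this.mono_left nhdsWithin_le_nhds
    have hden : Tendsto (fun θ => (4 * Real.sin θ ^ 2 : ℝ)) (nhdsWithin π (Ioo 0 π))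
        (nhdsWithin 0 (Ioi 0)) := by
      apply tendsto_nhdsWithin_of_tendsto_nhds_of_eventually_within
      · have : Tendsto (fun θ => (4 * Real.sin θ ^ 2 : ℝ)) (nhds π)
            (nhds (4 * Real.sin π ^ 2)) := (Continuous.tendsto (by continuity) π)
        simpa using this.mono_left nhdsWithin_le_nhds
      · filter_upwards [self_mem_nhdsWithin] with t ht
        have := Real.sin_pos_of_pos_of_lt_pi ht.1 ht.2
        exact Set.mem_Ioi.2 (by positivity)
    have hinv : Tendsto (fun θ => (4 * Real.sin θ ^ 2 : ℝ)⁻¹) (nhdsWithin π (Ioo 0 π))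
        atTop := tendsto_inv_nhdsGT_zero.comp hden
    have := Filter.Tendsto.pos_mul_atTop Real.pi_pos hnum hinv
    apply this.congr
    intro t; rw [gA, div_eq_mul_inv]
  obtain ⟨b, hb, hby⟩ : ∃ b, b ∈ Ioo 0 π ∧ y < gA b := by
    have := (htop.eventually_gt_atTop y).and self_mem_nhdsWithin
    exact (this.exists).imp (fun b hb => ⟨hb.2, hb.1⟩)
  have hsub : Icc (0:ℝ) b ⊆ Ico 0 π := fun t ht => ⟨ht.1, lt_of_le_of_lt ht.2 hb.2⟩
  have := intermediate_value_Icc hb.1.le (gA_contOn.mono hsub)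
  have hy' : y ∈ Icc (gA 0) (gA b) := by
    rw [gA_zero]; exact ⟨hy, hby.le⟩
  obtain ⟨θ, hθ, hθy⟩ := this hy'
  exact ⟨θ, hsub hθ, hθy⟩
lemma f_zero {f : ℝ → ℝ} (hf : IsArcOne f) : f 0 = 1 := by
  have hc : Tendsto f (nhdsWithin 0 (Ici 0)) (nhds (f 0)) :=
    hf.1 0 (Set.self_mem_Ici)
  have hg : Tendsto gA (nhdsWithin 0 (Ioi 0)) (nhdsWithin 0 (Ici 0)) := by
    apply tendsto_nhdsWithin_of_tendsto_nhds_of_eventually_within _ gA_tendsto_zero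
    filter_upwards [Ioo_mem_nhdsGT_of_mem (Set.left_mem_Ico.2 Real.pi_pos)] with t ht
    exact (gA_pos ht).le
  have h1 : Tendsto (f ∘ gA) (nhdsWithin 0 (Ioi 0)) (nhds (f 0)) := hc.comp hg
  have h2 : Tendsto (f ∘ gA) (nhdsWithin 0 (Ioi 0)) (nhds 1) := by
    have h3 : Tendsto hA (nhdsWithin 0 (Ioi 0)) (nhds 1) :=
      hA_tendsto_one.mono_left (nhdsWithin_mono _ (fun t ht => ne_of_gt ht))
    apply h3.congr'
    filter_upwards [Ioo_mem_nhdsGT_of_mem (Set.left_mem_Ico.2 Real.pi_pos)] with t ht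
    rw [hA_of_ne ht.1.ne']
    exact (hf.2 t ht).symm
  exact tendsto_nhds_unique h1 h2

lemma f_eq {f : ℝ → ℝ} (hf : IsArcOne f) {θ : ℝ} (h : θ ∈ Ico 0 π) :
    f (gA θ) = hA θ := by
  rcases eq_or_lt_of_le h.1 with h0 | h0
  · rw [← h0, gA_zero, hA_zero, f_zero hf]
  · rw [hA_of_ne h0.ne']
    exact hf.2 θ ⟨h0, h.2⟩

lemma mono_f {f : ℝ → ℝ} (hf : IsArcOne f) : MonotoneOn f (Ici 0) := by
  intro s hs t ht hst
  rcases eq_or_lt_of_le hst with h0 | h0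
  · rw [h0]
  obtain ⟨θs, hθs, hgs⟩ := gA_surj hs
  obtain ⟨θt, hθt, hgt⟩ := gA_surj (le_trans hs hst)
  have hlt : θs < θt := by
    rw [← gA_mono.lt_iff_lt hθs hθt, hgs, hgt]; exact h0
  rw [← hgs, ← hgt, f_eq hf hθs, f_eq hf hθt]
  exact (hA_mono hθs hθt hlt).le

lemma iccHalfSubset : Icc (0:ℝ) (π/2) ⊆ Ico 0 π := fun t ht =>
  ⟨ht.1, lt_of_le_of_lt ht.2 (by linarith [Real.pi_pos])⟩

lemma gA_surj' {y : ℝ} (hy : y ∈ Icc 0 (π/8)) : ∃ θ ∈ Icc 0 (π/2), gA θ = y := by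
  have h2 := intermediate_value_Icc (by positivity : (0:ℝ) ≤ π/2) (gA_contOn.mono iccHalfSubset)
  rw [gA_zero, gA_half] at h2
  obtain ⟨θ, hθ, hθy⟩ := h2 hy
  exact ⟨θ, hθ, hθy⟩

lemma slope_eq {a b : ℝ} (ha : a ∈ Icc 0 (π/2)) (hb : b ∈ Icc 0 (π/2)) (hab : a < b) :
    ∃ ξ ∈ Ioo a b, (hA b - hA a) / (gA b - gA a) = 2 * Real.sin ξ := by
  have hsub : Icc a b ⊆ Ico 0 π := fun t ht =>
    iccHalfSubset ⟨ha.1.trans ht.1, ht.2.trans hb.2⟩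
  have hIoo : Ioo a b ⊆ Ioo 0 π := fun t ht =>
    ⟨lt_of_le_of_lt ha.1 ht.1, lt_of_lt_of_le ht.2 (iccHalfSubset hb).2.le⟩
  obtain ⟨ξ, hξ, heq⟩ := exists_ratio_hasDerivAt_eq_ratio_slope hA
    (fun t => (Real.sin t - t * Real.cos t) / Real.sin t ^ 2) hab
    (hA_contOn.mono hsub) (fun u hu => hA_hasDeriv (hIoo hu)) gA
    (fun t => (Real.sin t - t * Real.cos t) / (2 * Real.sin t ^ 3))
    (gA_contOn.mono hsub) (fun u hu => gA_hasDeriv (hIoo hu))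
  refine ⟨ξ, hξ, ?_⟩
  have hξ' := hIoo hξ
  have hs := Real.sin_pos_of_pos_of_lt_pi hξ'.1 hξ'.2
  have hk := key2 hξ'
  have hgd : gA a < gA b :=
    gA_mono (hsub ⟨le_refl a, hab.le⟩) (hsub ⟨hab.le, le_refl b⟩) hab
  have hD : (Real.sin ξ - ξ * Real.cos ξ) / (2 * Real.sin ξ ^ 3) ≠ 0 := by positivity
  have hd1 : (Real.sin ξ - ξ * Real.cos ξ) / Real.sin ξ ^ 2 =
      (2 * Real.sin ξ) * ((Real.sin ξ - ξ * Real.cos ξ) / (2 * Real.sin ξ ^ 3)) := by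
    field_simp
  rw [hd1] at heq
  have h2 : (gA b - gA a) * (2 * Real.sin ξ) = hA b - hA a := by
    have := mul_right_cancel₀ hD (by linarith [heq] : ((gA b - gA a) * (2 * Real.sin ξ)) *
      ((Real.sin ξ - ξ * Real.cos ξ) / (2 * Real.sin ξ ^ 3)) = (hA b - hA a) *
      ((Real.sin ξ - ξ * Real.cos ξ) / (2 * Real.sin ξ ^ 3)))
    exact this
  rw [← h2]
  exact mul_div_cancel_left₀ _ (sub_pos.2 hgd).ne'

lemma convex_f {f : ℝ → ℝ} (hf : IsArcOne f) : ConvexOn ℝ (Icc 0 (π/8)) f := by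
  apply convexOn_of_slope_mono_adjacent (convex_Icc 0 (π/8))
  intro p q r hp hr hpq hqr
  have hq : q ∈ Icc 0 (π/8) := ⟨hp.1.trans hpq.le, hqr.le.trans hr.2⟩
  obtain ⟨θp, hθp, hgp⟩ := gA_surj' hp
  obtain ⟨θq, hθq, hgq⟩ := gA_surj' hq
  obtain ⟨θr, hθr, hgr⟩ := gA_surj' hr
  have h1 : θp < θq := by
    rw [← gA_mono.lt_iff_lt (iccHalfSubset hθp) (iccHalfSubset hθq), hgp, hgq]; exact hpq
  have h2 : θq < θr := by
    rw [← gA_mono.lt_iff_lt (iccHalfSubset hθq) (iccHalfSubset hθr), hgq, hgr]; exact hqr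
  obtain ⟨ξ1, hξ1, hs1⟩ := slope_eq hθp hθq h1
  obtain ⟨ξ2, hξ2, hs2⟩ := slope_eq hθq hθr h2
  have hfp : f p = hA θp := by rw [← hgp, f_eq hf (iccHalfSubset hθp)]
  have hfq : f q = hA θq := by rw [← hgq, f_eq hf (iccHalfSubset hθq)]
  have hfr : f r = hA θr := by rw [← hgr, f_eq hf (iccHalfSubset hθr)]
  rw [hfp, hfq, hfr, ← hgp, ← hgq, ← hgr, hs1, hs2]
  have hmem1 : ξ1 ∈ Icc (-(π/2)) (π/2) :=
    ⟨le_trans (by linarith [Real.pi_pos]) (hθp.1.trans hξ1.1.le),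
      hξ1.2.le.trans hθq.2⟩
  have hmem2 : ξ2 ∈ Icc (-(π/2)) (π/2) :=
    ⟨le_trans (by linarith [Real.pi_pos]) (hθq.1.trans hξ2.1.le),
      hξ2.2.le.trans hθr.2⟩
  have : Real.sin ξ1 ≤ Real.sin ξ2 :=
    (Real.strictMonoOn_sin.monotoneOn) hmem1 hmem2 (le_of_lt (hξ1.2.trans hξ2.1))
  linarith
/-- Chordal isoperimetric estimate: if a convex hexagon has sides of lengths
`ℓ₁, ..., ℓ₆ < 1` and each side is replaced by a circular arc with the same endpoints
enclosing area `xᵢ ≥ 0` with the side, with `xᵢ/ℓᵢ ≤ π/8`, then the total length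
`L(γ) = ∑ arc(ℓᵢ, xᵢ) = ∑ ℓᵢ · arc₁(xᵢ/ℓᵢ²)` satisfies
`L(γ) ≥ P(Π) · arc₁((∑xᵢ)/P(Π))` with `P(Π) = ∑ ℓᵢ`. -/
theorem stmt8 (f : ℝ → ℝ) (hf : IsArcOne f) (ℓ x : Fin 6 → ℝ)
    (hℓ0 : ∀ i, 0 < ℓ i) (hℓ1 : ∀ i, ℓ i < 1)
    (hx : ∀ i, 0 ≤ x i) (hratio : ∀ i, x i / ℓ i ≤ Real.pi / 8) :
    (∑ i, ℓ i) * f ((∑ i, x i) / (∑ i, ℓ i)) ≤ ∑ i, ℓ i * f (x i / (ℓ i) ^ 2) := by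
  set L := ∑ i, ℓ i with hLdef
  have hL : 0 < L := Finset.sum_pos (fun i _ => hℓ0 i) Finset.univ_nonempty
  set a : Fin 6 → ℝ := fun i => x i / ℓ i with hadef
  have ha0 : ∀ i, 0 ≤ a i := fun i => div_nonneg (hx i) (hℓ0 i).le
  have hamem : ∀ i, a i ∈ Icc 0 (π/8) := fun i => ⟨ha0 i, hratio i⟩
  set w : Fin 6 → ℝ := fun i => ℓ i / L with hwdef
  have hw0 : ∀ i ∈ Finset.univ, 0 ≤ w i := fun i _ => div_nonneg (hℓ0 i).le hL.le
  have hw1 : ∑ i, w i = 1 := by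
    rw [hwdef]; rw [← Finset.sum_div]; exact div_self hL.ne'
  have hjensen := (convex_f hf).map_sum_le hw0 hw1 (fun i _ => hamem i)
  have harg : (∑ i, w i • a i) = (∑ i, x i) / L := by
    rw [Finset.sum_div]
    apply Finset.sum_congr rfl
    intro i _
    have := (hℓ0 i).ne'
    simp only [smul_eq_mul, hwdef, hadef]
    field_simp
  rw [harg] at hjensen
  have step1 : L * f ((∑ i, x i) / L) ≤ ∑ i, ℓ i * f (a i) := by
    calc L * f ((∑ i, x i) / L) ≤ L * ∑ i, w i • f (a i) := by
          exact mul_le_mul_of_nonneg_left hjensen hL.le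
      _ = ∑ i, ℓ i * f (a i) := by
          rw [Finset.mul_sum]
          apply Finset.sum_congr rfl
          intro i _
          simp only [smul_eq_mul, hwdef]
          field_simp
  refine le_trans step1 (Finset.sum_le_sum ?_)
  intro i _
  apply mul_le_mul_of_nonneg_left _ (hℓ0 i).le
  have hle : a i ≤ x i / ℓ i ^ 2 := by
    rw [sq, ← div_div]
    rw [le_div_iff₀ (hℓ0 i)]
    calc a i * ℓ i ≤ a i * 1 := mul_le_mul_of_nonneg_left (hℓ1 i).le (ha0 i)
      _ = a i := mul_one _
  exact mono_f hf (ha0 i) (le_trans (ha0 i) hle) hle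
end
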